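/- Define f : ℝ → ℝ by f(w) = 1 if w ≤ 0 and f(w) = w if w > 0. Then: (i) for every w ∈ [−1, 1] and every x₀ ∈ [−1, 1], f(w) ≤ ReLU(x₀ + w) + 1; and (ii) f is not continuous at w = 0. -/

import Mathlib

/-- ReLU activation. -/
noncomputable def ReLU (x : ℝ) : ℝ := max x 0

/-- Minimal example of CROWN's discontinuity: the CROWN lower bound
`f(w) = 1` for `w ≤ 0` and `f(w) = w` for `w > 0` of the output neuron
`x₃,₁ = ReLU(x₀ + w) + 1` is (i) a valid lower bound on the true output for all
`w, x₀ ∈ [−1, 1]`, and (ii) not continuous at `w = 0`. -/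
theorem crown_example_discontinuous :
    (∀ w ∈ Set.Icc (-1 : ℝ) 1, ∀ x₀ ∈ Set.Icc (-1 : ℝ) 1,
      (if w ≤ 0 then (1 : ℝ) else w) ≤ ReLU (x₀ + w) + 1) ∧
    ¬ ContinuousAt (fun w : ℝ => if w ≤ 0 then (1 : ℝ) else w) 0 := by
  constructor
  · intro w hw x₀ hx₀
    have h0 : (0 : ℝ) ≤ ReLU (x₀ + w) := le_max_right _ _
    split_ifs with h
    · linarith
    · linarith [hw.2]
  · intro hcont
    have h1 : Filter.Tendsto (fun w : ℝ => if w ≤ 0 then (1 : ℝ) else w)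
        (nhdsWithin 0 (Set.Ioi 0)) (nhds 1) := by
      have h := hcont.continuousWithinAt (s := Set.Ioi 0)
      simpa [ContinuousWithinAt] using h
    have h2 : Filter.Tendsto (fun w : ℝ => if w ≤ 0 then (1 : ℝ) else w)
        (nhdsWithin 0 (Set.Ioi 0)) (nhds 0) := by
      have : Filter.Tendsto (fun w : ℝ => w) (nhdsWithin 0 (Set.Ioi 0)) (nhds 0) :=
        Filter.tendsto_id.mono_left nhdsWithin_le_nhds
      refine this.congr' ?_
      filter_upwards [self_mem_nhdsWithin] with w hw
      simp [not_le.mpr (Set.mem_Ioi.mp hw)]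
    have := tendsto_nhds_unique h1 h2
    norm_num at this
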